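/- Let R be a commutative ring of characteristic p > 0 and let g = 1 + h be an element of the divided power series ring R{{𝔇}} with h having zero constant term. Then g^p = 1. -/

import Mathlib

open Finset Polynomial

/-- Multiplication in the divided power series ring `R{{𝔇}}`, written coefficientwise:
`(a·b)_n = ∑ C(n,i) a_i b_{n-i}`, corresponding to `𝔇_i·𝔇_j = C(i+j,j) 𝔇_{i+j}`. -/
def dpMul {R : Type*} [CommRing R] (a b : ℕ → R) : ℕ → R :=
  fun n => ∑ i ∈ Finset.range (n + 1), (n.choose i : R) * a i * b (n - i)

/-- The unit `1 = 𝔇_0` of the divided power series ring. -/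
def dpOne (R : Type*) [CommRing R] : ℕ → R := fun n => if n = 0 then 1 else 0

/-- A sequence of polynomials satisfies the Binomial Theorem:
`p_n(x+y) = ∑_{i=0}^n C(n,i) p_i(x) p_{n-i}(y)` in `F[x,y]`. -/
def IsBinomialSeq {F : Type*} [Field F] (p : ℕ → Polynomial F) : Prop :=
  ∀ n : ℕ,
    Polynomial.aeval (MvPolynomial.X 0 + MvPolynomial.X 1 : MvPolynomial (Fin 2) F) (p n) =
      ∑ i ∈ Finset.range (n + 1), (n.choose i : MvPolynomial (Fin 2) F) *
        Polynomial.aeval (MvPolynomial.X 0 : MvPolynomial (Fin 2) F) (p i) *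
        Polynomial.aeval (MvPolynomial.X 1 : MvPolynomial (Fin 2) F) (p (n - i))


/-- `p`-th power in the divided power series ring. -/
def dpPow {R : Type*} [CommRing R] (a : ℕ → R) : ℕ → (ℕ → R)
  | 0 => dpOne R
  | n + 1 => dpMul a (dpPow a n)

namespace DPAux

variable {R : Type*} [CommRing R]

lemma dpMul_comm (a b : ℕ → R) : dpMul a b = dpMul b a := by
  funext n
  show ∑ i ∈ Finset.range (n + 1), (n.choose i : R) * a i * b (n - i)
      = ∑ i ∈ Finset.range (n + 1), (n.choose i : R) * b i * a (n - i)
  rw [← Finset.sum_range_reflect]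
  refine Finset.sum_congr rfl fun i hi => ?_
  rw [Finset.mem_range, Nat.lt_succ_iff] at hi
  rw [Nat.add_sub_cancel, Nat.choose_symm hi, Nat.sub_sub_self hi]
  ring

lemma dpOne_mul (a : ℕ → R) : dpMul (dpOne R) a = a := by
  funext n
  show ∑ i ∈ Finset.range (n + 1), (n.choose i : R) * dpOne R i * a (n - i) = a n
  rw [Finset.sum_eq_single 0]
  · simp [dpOne]
  · intro i _ h0
    simp [dpOne, h0]
  · intro h
    exact absurd (Finset.mem_range.mpr (Nat.succ_pos n)) h

lemma dpMul_one (a : ℕ → R) : dpMul a (dpOne R) = a := by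
  rw [dpMul_comm]; exact dpOne_mul a

lemma dpMul_add (a b c : ℕ → R) : dpMul a (b + c) = dpMul a b + dpMul a c := by
  funext n
  show ∑ i ∈ Finset.range (n + 1), (n.choose i : R) * a i * (b (n - i) + c (n - i))
      = _ + _
  simp [dpMul, mul_add, Finset.sum_add_distrib]

lemma dpAdd_mul (a b c : ℕ → R) : dpMul (a + b) c = dpMul a c + dpMul b c := by
  rw [dpMul_comm, dpMul_add, dpMul_comm c a, dpMul_comm c b]

lemma dpZero_mul (a : ℕ → R) : dpMul 0 a = 0 := by
  funext n; simp [dpMul]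

lemma dpMul_zero (a : ℕ → R) : dpMul a 0 = 0 := by
  rw [dpMul_comm]; exact dpZero_mul a

lemma dpMul_assoc (a b c : ℕ → R) : dpMul (dpMul a b) c = dpMul a (dpMul b c) := by
  funext n
  show ∑ i ∈ Finset.range (n + 1),
        (n.choose i : R) * (∑ j ∈ Finset.range (i + 1), (i.choose j : R) * a j * b (i - j))
          * c (n - i)
      = ∑ j ∈ Finset.range (n + 1), (n.choose j : R) * a j *
          (∑ k ∈ Finset.range (n - j + 1), ((n - j).choose k : R) * b k * c (n - j - k))
  simp only [Finset.sum_mul, Finset.mul_sum]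
  rw [Finset.sum_sigma', Finset.sum_sigma']
  refine Finset.sum_bij' (fun x _ => (⟨x.2, x.1 - x.2⟩ : (_ : ℕ) × ℕ))
      (fun x _ => (⟨x.1 + x.2, x.1⟩ : (_ : ℕ) × ℕ)) ?_ ?_ ?_ ?_ ?_
  · rintro ⟨i, j⟩ h
    simp only [Finset.mem_sigma, Finset.mem_range, Nat.lt_succ_iff] at h ⊢
    omega
  · rintro ⟨j, k⟩ h
    simp only [Finset.mem_sigma, Finset.mem_range, Nat.lt_succ_iff] at h ⊢
    omega
  · rintro ⟨i, j⟩ h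
    simp only [Finset.mem_sigma, Finset.mem_range, Nat.lt_succ_iff] at h
    have h1 : j + (i - j) = i := by omega
    simp only [h1]
  · rintro ⟨j, k⟩ h
    simp only [Finset.mem_sigma, Finset.mem_range, Nat.lt_succ_iff] at h
    have h1 : j + k - j = k := by omega
    simp only [h1]
  · rintro ⟨i, j⟩ h
    simp only [Finset.mem_sigma, Finset.mem_range, Nat.lt_succ_iff] at h
    obtain ⟨hin, hji⟩ := h
    have harith : n - j - (i - j) = n - i := by omega
    have hcm : (n.choose i) * (i.choose j) = n.choose j * ((n - j).choose (i - j)) :=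
      Nat.choose_mul hji
    have hcast := congrArg (Nat.cast : ℕ → R) hcm
    push_cast at hcast
    dsimp only
    rw [harith]
    linear_combination (a j * b (i - j) * c (n - i)) * hcast

/-- Type synonym carrying the divided power series ring structure. -/
def DP (R : Type*) [CommRing R] := ℕ → R

def mk : (ℕ → R) → DP R := id

def coef : DP R → ℕ → R := id

instance : AddCommGroup (DP R) := inferInstanceAs (AddCommGroup (ℕ → R))

instance : CommRing (DP R) where
  __ := (inferInstance : AddCommGroup (ℕ → R))
  mul := dpMul
  one := dpOne R
  mul_assoc := dpMul_assoc
  one_mul := dpOne_mul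
  mul_one := dpMul_one
  left_distrib := dpMul_add
  right_distrib := dpAdd_mul
  zero_mul := dpZero_mul
  mul_zero := dpMul_zero
  mul_comm := dpMul_comm

lemma ext {a b : DP R} (h : ∀ n, coef a n = coef b n) : a = b := funext h

lemma coef_mul (a b : DP R) (n : ℕ) :
    coef (a * b) n = ∑ i ∈ Finset.range (n + 1), (n.choose i : R) * coef a i * coef b (n - i) :=
  rfl

lemma coef_one (n : ℕ) : coef (1 : DP R) n = if n = 0 then 1 else 0 := rfl

lemma coef_zero (n : ℕ) : coef (0 : DP R) n = 0 := rfl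

lemma coef_add (a b : DP R) (n : ℕ) : coef (a + b) n = coef a n + coef b n := rfl

/-- coefficient as an additive monoid hom -/
def coefHom (n : ℕ) : DP R →+ R where
  toFun a := coef a n
  map_zero' := rfl
  map_add' _ _ := rfl

lemma coef_natCast (m n : ℕ) : coef ((m : ℕ) : DP R) n = if n = 0 then (m : R) else 0 := by
  induction m with
  | zero => simp [coef_zero]
  | succ m ih =>
    rw [Nat.cast_succ, coef_add, ih, coef_one]
    push_cast
    split_ifs <;> simp

lemma dpCharP (p : ℕ) [CharP R p] : CharP (DP R) p := by
  constructor
  intro n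
  constructor
  · intro h
    have h0 := congrArg (fun a => coef a 0) h
    simp only [coef_natCast, if_pos rfl, coef_zero] at h0
    exact (CharP.cast_eq_zero_iff R p n).mp h0
  · intro h
    apply ext
    intro m
    rw [coef_natCast, coef_zero, (CharP.cast_eq_zero_iff R p n).mpr h]
    split_ifs <;> rfl

/-- the element `r·𝔇_t` -/
def single (t : ℕ) (r : R) : DP R := mk (fun n => if n = t then r else 0)

lemma coef_single (t : ℕ) (r : R) (n : ℕ) : coef (single t r) n = if n = t then r else 0 := rfl

lemma single_zero (t : ℕ) : single t (0 : R) = 0 := by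
  apply ext; intro n; rw [coef_single, coef_zero]; split_ifs <;> rfl

lemma one_eq_single : (1 : DP R) = single 0 1 := rfl

lemma single_mul_single (s t : ℕ) (r u : R) :
    single s r * single t u = single (s + t) (((s + t).choose s : R) * (r * u)) := by
  apply ext
  intro n
  rw [coef_mul, coef_single]
  simp only [coef_single, mul_ite, ite_mul, zero_mul, mul_zero]
  have hconv : ∀ x, (if n - x = t then if x = s then (n.choose x : R) * r * u else 0 else 0)
      = if x = s then (if n - x = t then (n.choose x : R) * r * u else 0) else 0 := by
    intro x; split_ifs <;> rfl
  simp_rw [hconv]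
  rw [Finset.sum_ite_eq' (Finset.range (n + 1)) s]
  by_cases hn : n = s + t
  · subst hn
    rw [if_pos (show s ∈ Finset.range (s + t + 1) from Finset.mem_range.mpr (by omega)),
      if_pos (show s + t - s = t by omega), if_pos rfl]
    ring
  · rw [if_neg hn]
    split_ifs with h1 h2
    · rw [Finset.mem_range, Nat.lt_succ_iff] at h1
      omega
    · rfl
    · rfl

def csq (k : ℕ) : ℕ → ℕ
  | 0 => 1
  | m + 1 => ((m + 1) * k).choose k * csq k m

lemma single_one_pow (k m : ℕ) :
    (single k (1 : R)) ^ m = single (m * k) ((csq k m : R)) := by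
  induction m with
  | zero => simp [csq, one_eq_single]
  | succ m ih =>
    rw [pow_succ', ih, single_mul_single]
    have h1 : k + m * k = (m + 1) * k := by ring
    rw [h1]
    have h2 : ((((m + 1) * k).choose k : ℕ) : R) * (1 * (csq k m : R))
        = ((csq k (m + 1) : ℕ) : R) := by
      rw [csq]; push_cast; ring
    rw [h2]

lemma single_zero_pow (r : R) (m : ℕ) : (single 0 r) ^ m = single 0 (r ^ m) := by
  induction m with
  | zero => simp [one_eq_single]
  | succ m ih =>
    rw [pow_succ', ih, single_mul_single]
    simp [pow_succ']

lemma single_eq_mul (k : ℕ) (r : R) : single k r = single 0 r * single k 1 := by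
  rw [single_mul_single]
  simp

/-- Key divisibility: `p ∣ C(p·k, k)` for `k ≥ 1`, via Lucas' theorem. -/
lemma prime_dvd_choose (p : ℕ) (hp : p.Prime) : ∀ k, k ≠ 0 → p ∣ (p * k).choose k := by
  haveI : Fact p.Prime := ⟨hp⟩
  intro k
  induction k using Nat.strong_induction_on with
  | _ k ih =>
    intro hk
    have lucas := Choose.choose_modEq_choose_mod_mul_choose_div (p := p) (n := p * k) (k := k)
    rw [Nat.mul_mod_right, Nat.mul_div_cancel_left _ hp.pos] at lucas
    by_cases hkp : k % p = 0
    · rw [hkp] at lucas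
      simp only [Nat.choose_self, Nat.cast_one, Nat.cast_mul, one_mul] at lucas
      have hdvd : p ∣ k := Nat.dvd_of_mod_eq_zero hkp
      have hk1 : k / p ≠ 0 := by
        rcases hdvd with ⟨c, hc⟩
        subst hc
        rw [Nat.mul_div_cancel_left _ hp.pos]
        rintro rfl
        simp at hk
      have hlt : k / p < k := Nat.div_lt_self (Nat.pos_of_ne_zero hk) hp.one_lt
      have hrec : p ∣ (p * (k / p)).choose (k / p) := ih _ hlt hk1
      have hback : p * (k / p) = k := Nat.mul_div_cancel' hdvd
      rw [hback] at hrec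
      have : ((p * k).choose k : ℤ) ≡ 0 [ZMOD p] := by
        refine lucas.trans (Int.modEq_zero_iff_dvd.mpr ?_)
        exact_mod_cast Int.natCast_dvd_natCast.mpr hrec
      exact_mod_cast Int.natCast_dvd_natCast.mp (Int.modEq_zero_iff_dvd.mp this)
    · have : (0 : ℕ).choose (k % p) = 0 :=
        Nat.choose_eq_zero_of_lt (Nat.pos_of_ne_zero hkp)
      rw [this] at lucas
      simp only [Nat.cast_zero, zero_mul] at lucas
      exact_mod_cast Int.natCast_dvd_natCast.mp (Int.modEq_zero_iff_dvd.mp lucas)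

lemma single_pow_eq_zero (p : ℕ) (hp : p.Prime) [CharP R p] (k : ℕ) (hk : k ≠ 0) (r : R) :
    (single k r) ^ p = 0 := by
  rw [single_eq_mul, mul_pow, single_one_pow]
  have hdvd : p ∣ csq k p := by
    obtain ⟨m, hm⟩ : ∃ m, p = m + 1 := ⟨p - 1, (Nat.succ_pred_eq_of_pos hp.pos).symm⟩
    have : csq k p = ((m + 1) * k).choose k * csq k m := by rw [hm, csq]
    rw [this, ← hm]
    exact Dvd.dvd.mul_right (prime_dvd_choose p hp k hk) _
  rw [(CharP.cast_eq_zero_iff R p _).mpr hdvd, single_zero, mul_zero]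

lemma coef_mul_congr {n : ℕ} {a a' b b' : DP R}
    (ha : ∀ m ≤ n, coef a m = coef a' m) (hb : ∀ m ≤ n, coef b m = coef b' m) :
    ∀ m ≤ n, coef (a * b) m = coef (a' * b') m := by
  intro m hm
  rw [coef_mul, coef_mul]
  refine Finset.sum_congr rfl fun i hi => ?_
  rw [Finset.mem_range, Nat.lt_succ_iff] at hi
  rw [ha i (hi.trans hm), hb (m - i) (le_trans (Nat.sub_le m i) hm)]

lemma coef_pow_congr {n : ℕ} {a a' : DP R} (ha : ∀ m ≤ n, coef a m = coef a' m) (e : ℕ) :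
    ∀ m ≤ n, coef (a ^ e) m = coef (a' ^ e) m := by
  induction e with
  | zero => intro m _; simp
  | succ e ih =>
    intro m hm
    rw [pow_succ, pow_succ]
    exact coef_mul_congr ih ha m hm

lemma dpPow_eq (g : ℕ → R) : ∀ m, dpPow g m = coef ((mk g) ^ m) := by
  intro m
  induction m with
  | zero => rw [pow_zero]; rfl
  | succ m ih =>
    show dpMul g (dpPow g m) = coef ((mk g) ^ (m + 1))
    rw [ih, pow_succ']
    rfl

end DPAux

/-- In characteristic `p`, any `g = 1 + (higher terms)` in `R{{𝔇}}` satisfies `g^p = 1`. -/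
theorem stmt6 {R : Type*} [CommRing R] (p : ℕ) (hp : p.Prime) [CharP R p]
    (g : ℕ → R) (h0 : g 0 = 1) : dpPow g p = dpOne R := by
  classical
  haveI : Fact p.Prime := ⟨hp⟩
  haveI : CharP (DPAux.DP R) p := DPAux.dpCharP p
  set G : DPAux.DP R := DPAux.mk g with hG
  set H : DPAux.DP R := G - 1 with hH
  have hH0 : DPAux.coef H 0 = 0 := by
    show g 0 - DPAux.coef (1 : DPAux.DP R) 0 = 0
    rw [DPAux.coef_one, h0]
    simp
  have hGH : G = 1 + H := by rw [hH]; ring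
  have hHp : H ^ p = 0 := by
    apply DPAux.ext
    intro n
    set S : DPAux.DP R := ∑ k ∈ Finset.Icc 1 n, DPAux.single k (DPAux.coef H k) with hS
    have coefS : ∀ m, DPAux.coef S m
        = ∑ k ∈ Finset.Icc 1 n, (if m = k then DPAux.coef H k else 0) := by
      intro m
      show (DPAux.coefHom m) S = _
      rw [hS, map_sum]
      exact Finset.sum_congr rfl fun k _ => rfl
    have htr : ∀ m ≤ n, DPAux.coef H m = DPAux.coef S m := by
      intro m hm
      rw [coefS, Finset.sum_ite_eq]
      by_cases hm0 : m = 0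
      · subst hm0
        rw [if_neg (by simp), hH0]
      · rw [if_pos (Finset.mem_Icc.mpr ⟨Nat.one_le_iff_ne_zero.mpr hm0, hm⟩)]
    have h1 := DPAux.coef_pow_congr htr p n le_rfl
    have hSp : S ^ p = 0 := by
      rw [hS, sum_pow_char]
      refine Finset.sum_eq_zero fun k hk => ?_
      exact DPAux.single_pow_eq_zero p hp k (by rw [Finset.mem_Icc] at hk; omega) _
    rw [h1, hSp]
  have hGp : G ^ p = 1 := by
    rw [hGH, add_pow_char, one_pow, hHp, add_zero]
  rw [DPAux.dpPow_eq g p, ← hG, hGp]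
  rfl
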